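/- For any league outcome with n ≥ 2 teams and any team A, if P(A) ≤ 3n−6 then (n−1)·P(A) − P̄(A) ≤ 3(n−1)(n−2) − 3. -/

import Mathlib

open Finset

inductive MatchResult : Type
  | homeWin : MatchResult
  | draw : MatchResult
  | awayWin : MatchResult
  deriving DecidableEq

instance instFintypeMatchResult : Fintype MatchResult :=
  ⟨{.homeWin, .draw, .awayWin}, fun x => by cases x <;> simp⟩

/-- A league outcome: a result for each ordered pair of distinct teams
(the first component is the home team). -/
abbrev LeagueOutcome (n : ℕ) : Type :=
  {p : Fin n × Fin n // p.1 ≠ p.2} → MatchResult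

/-- Points earned by the home team. -/
def homePts : MatchResult → ℕ
  | .homeWin => 3
  | .draw => 1
  | .awayWin => 0

/-- Points earned by the away team. -/
def awayPts : MatchResult → ℕ
  | .homeWin => 0
  | .draw => 1
  | .awayWin => 3

/-- Total points of team `i`: sum over all matches of the points `i` earns in them. -/
def totalPoints {n : ℕ} (r : LeagueOutcome n) (i : Fin n) : ℕ :=
  ∑ m : {p : Fin n × Fin n // p.1 ≠ p.2},
    ((if m.val.1 = i then homePts (r m) else 0) +
     (if m.val.2 = i then awayPts (r m) else 0))

/-- Total points the other teams earn in their matches against team `i`. -/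
def oppPoints {n : ℕ} (r : LeagueOutcome n) (i : Fin n) : ℕ :=
  ∑ m : {p : Fin n × Fin n // p.1 ≠ p.2},
    ((if m.val.1 = i then awayPts (r m) else 0) +
     (if m.val.2 = i then homePts (r m) else 0))

/-- Number of matches that team `i` wins. -/
def wins {n : ℕ} (r : LeagueOutcome n) (i : Fin n) : ℕ :=
  (Finset.univ.filter (fun m : {p : Fin n × Fin n // p.1 ≠ p.2} =>
    (m.val.1 = i ∧ r m = .homeWin) ∨ (m.val.2 = i ∧ r m = .awayWin))).card

/-- Number of matches that team `i` draws. -/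
def draws {n : ℕ} (r : LeagueOutcome n) (i : Fin n) : ℕ :=
  (Finset.univ.filter (fun m : {p : Fin n × Fin n // p.1 ≠ p.2} =>
    (m.val.1 = i ∨ m.val.2 = i) ∧ r m = .draw)).card

/-- Number of matches that team `i` loses. -/
def losses {n : ℕ} (r : LeagueOutcome n) (i : Fin n) : ℕ :=
  (Finset.univ.filter (fun m : {p : Fin n × Fin n // p.1 ≠ p.2} =>
    (m.val.1 = i ∧ r m = .awayWin) ∨ (m.val.2 = i ∧ r m = .homeWin))).card

lemma count_fst {n : ℕ} (A : Fin n) :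
    ∑ m : {p : Fin n × Fin n // p.1 ≠ p.2}, (if m.val.1 = A then 2 else 0) = 2 * (n-1) := by
  rw [← Finset.sum_subtype (Finset.univ.filter (fun p : Fin n × Fin n => p.1 ≠ p.2))
    (by simp) (fun p => if p.1 = A then 2 else 0)]
  rw [Finset.sum_filter, Fintype.sum_prod_type]
  have : ∀ i : Fin n, (∑ j : Fin n, if i ≠ j then (if i = A then 2 else 0) else 0)
      = if i = A then 2 * (n-1) else 0 := by
    intro i
    by_cases hi : i = A
    · simp only [hi, if_pos rfl]
      rw [Finset.sum_ite, Finset.sum_const, Finset.sum_const]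
      simp [Finset.filter_ne, Finset.card_univ, mul_comm]
    · simp [hi]
  rw [Finset.sum_congr rfl (fun i _ => this i)]
  simp

lemma count_snd {n : ℕ} (A : Fin n) :
    ∑ m : {p : Fin n × Fin n // p.1 ≠ p.2}, (if m.val.2 = A then 2 else 0) = 2 * (n-1) := by
  rw [← Finset.sum_subtype (Finset.univ.filter (fun p : Fin n × Fin n => p.1 ≠ p.2))
    (by simp) (fun p => if p.2 = A then 2 else 0)]
  rw [Finset.sum_filter, Fintype.sum_prod_type_right]
  have : ∀ j : Fin n, (∑ i : Fin n, if i ≠ j then (if j = A then 2 else 0) else 0)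
      = if j = A then 2 * (n-1) else 0 := by
    intro j
    by_cases hj : j = A
    · simp only [hj, if_pos rfl]
      rw [Finset.sum_ite, Finset.sum_const, Finset.sum_const]
      simp [Finset.filter_ne', Finset.card_univ, mul_comm]
    · simp [hj]
  rw [Finset.sum_congr rfl (fun j _ => this j)]
  simp

lemma key {n : ℕ} (r : LeagueOutcome n) (A : Fin n) :
    4 * (n-1) ≤ totalPoints r A + oppPoints r A := by
  unfold totalPoints oppPoints
  rw [← Finset.sum_add_distrib]
  have hle : ∀ m : {p : Fin n × Fin n // p.1 ≠ p.2}, m ∈ Finset.univ →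
      ((if m.val.1 = A then 2 else 0) + (if m.val.2 = A then 2 else 0)) ≤
      ((if m.val.1 = A then homePts (r m) else 0) + (if m.val.2 = A then awayPts (r m) else 0)) +
      ((if m.val.1 = A then awayPts (r m) else 0) + (if m.val.2 = A then homePts (r m) else 0)) := by
    intro m _
    have h2 : 2 ≤ homePts (r m) + awayPts (r m) := by cases (r m) <;> simp [homePts, awayPts]
    split_ifs <;> omega
  calc 4 * (n-1) = 2*(n-1) + 2*(n-1) := by ring
    _ = ∑ m : {p : Fin n × Fin n // p.1 ≠ p.2},
        ((if m.val.1 = A then 2 else 0) + (if m.val.2 = A then 2 else 0)) := by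
        rw [Finset.sum_add_distrib, count_fst, count_snd]
    _ ≤ _ := Finset.sum_le_sum hle


/-- if `P(A) ≤ 3n−6` then `(n−1)·P(A) − P̄(A) ≤ 3(n−1)(n−2) − 3`. -/
theorem second_constraint_low_points (n : ℕ) (hn : 2 ≤ n) (r : LeagueOutcome n) (A : Fin n)
    (h : totalPoints r A ≤ 3 * n - 6) :
    ((n : ℤ) - 1) * (totalPoints r A : ℤ) - (oppPoints r A : ℤ) ≤
      3 * ((n : ℤ) - 1) * ((n : ℤ) - 2) - 3 := by
  have hk := key r A
  have hP : (totalPoints r A : ℤ) ≤ 3 * n - 6 := by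
    have : (totalPoints r A : ℤ) ≤ ((3*n - 6 : ℕ) : ℤ) := by exact_mod_cast h
    omega
  have hk' : (4 : ℤ) * (n - 1) ≤ (totalPoints r A : ℤ) + (oppPoints r A : ℤ) := by
    have : ((4 * (n-1) : ℕ) : ℤ) ≤ ((totalPoints r A + oppPoints r A : ℕ) : ℤ) := by exact_mod_cast hk
    push_cast at this
    omega
  have hn' : (2 : ℤ) ≤ n := by exact_mod_cast hn
  nlinarith [hP, hk', hn']
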